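/- Qubit upper bound: Let M = {|0⟩, |1⟩} and N = {cosθ|0⟩ − sinθ|1⟩, sinθ|0⟩ + cosθ|1⟩} with θ ∈ [0, π/2]. For λ ∈ (0, 1/2), over all density matrices ρ on ℂ² with ⟨0|ρ|0⟩ = λ and ⟨1|ρ|1⟩ = 1 − λ, the maximum of max{⟨v_1|ρ|v_1⟩, ⟨v_2|ρ|v_2⟩} equals (√λ sinθ + √(1−λ) cosθ)² if θ ∈ [0, π/4), and (√(1−λ) sinθ + √λ cosθ)² if θ ∈ [π/4, π/2]. -/

import Mathlib

set_option maxHeartbeats 1000000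


open Matrix ComplexOrder Real

/-- Measurement outcome probability `⟨v|ρ|v⟩` (real part). -/
noncomputable def outcome (ρ : Matrix (Fin 2) (Fin 2) ℂ) (v : Fin 2 → ℂ) : ℝ :=
  (star v ⬝ᵥ ρ.mulVec v).re

lemma quad_re (ρ : Matrix (Fin 2) (Fin 2) ℂ) (a b : ℝ) (v : Fin 2 → ℂ)
    (h0 : v 0 = (a : ℂ)) (h1 : v 1 = (b : ℂ)) :
    (star v ⬝ᵥ ρ.mulVec v).re =
      a ^ 2 * (ρ 0 0).re + b ^ 2 * (ρ 1 1).re + a * b * ((ρ 0 1).re + (ρ 1 0).re) := by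
  simp [dotProduct, mulVec, Fin.sum_univ_two, h0, h1, Complex.add_re, Complex.mul_re,
    Complex.conj_re, Complex.conj_im, Complex.ofReal_re, Complex.ofReal_im]
  ring

/-- The rank-one witness matrix with column `(a, b)` (real entries). -/
noncomputable def witness (a b : ℝ) : Matrix (Fin 2) (Fin 2) ℂ :=
  Matrix.of ![![(a : ℂ)], ![(b : ℂ)]] * (Matrix.of ![![(a : ℂ)], ![(b : ℂ)]])ᴴ

lemma witness_psd (a b : ℝ) : (witness a b).PosSemidef :=
  Matrix.posSemidef_self_mul_conjTranspose _

lemma witness_apply (a b : ℝ) (i j : Fin 2) :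
    witness a b i j = ((![a, b] i * ![a, b] j : ℝ) : ℂ) := by
  fin_cases i <;> fin_cases j <;>
    simp [witness, Matrix.mul_apply, Fin.sum_univ_one, Complex.conj_ofReal]

theorem qubit_upper_bound (θ lam : ℝ) (hθ0 : 0 ≤ θ) (hθ1 : θ ≤ π / 2)
    (hl0 : 0 < lam) (hl1 : lam < 1 / 2)
    (v₁ v₂ : Fin 2 → ℂ)
    (hv₁ : v₁ = ![(Real.cos θ : ℂ), (-(Real.sin θ) : ℂ)])
    (hv₂ : v₂ = ![(Real.sin θ : ℂ), (Real.cos θ : ℂ)]) :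
    (θ < π / 4 →
      IsGreatest {t : ℝ | ∃ ρ : Matrix (Fin 2) (Fin 2) ℂ, ρ.PosSemidef ∧
          ρ 0 0 = (lam : ℂ) ∧ ρ 1 1 = ((1 - lam : ℝ) : ℂ) ∧
          t = max (outcome ρ v₁) (outcome ρ v₂)}
        ((Real.sqrt lam * Real.sin θ + Real.sqrt (1 - lam) * Real.cos θ) ^ 2)) ∧
    (π / 4 ≤ θ →
      IsGreatest {t : ℝ | ∃ ρ : Matrix (Fin 2) (Fin 2) ℂ, ρ.PosSemidef ∧
          ρ 0 0 = (lam : ℂ) ∧ ρ 1 1 = ((1 - lam : ℝ) : ℂ) ∧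
          t = max (outcome ρ v₁) (outcome ρ v₂)}
        ((Real.sqrt (1 - lam) * Real.sin θ + Real.sqrt lam * Real.cos θ) ^ 2)) := by
  have hpi : 0 < π := Real.pi_pos
  have hl1' : (0:ℝ) < 1 - lam := by linarith
  obtain ⟨s, hs_def⟩ : ∃ s, Real.sqrt (lam * (1 - lam)) = s := ⟨_, rfl⟩
  have hs0 : 0 < s := by rw [← hs_def]; exact Real.sqrt_pos.mpr (by nlinarith)
  have hs2 : s ^ 2 = lam * (1 - lam) := by rw [← hs_def]; exact Real.sq_sqrt (by nlinarith)
  have hsl : Real.sqrt lam * Real.sqrt (1 - lam) = s := by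
    rw [← hs_def]; exact (Real.sqrt_mul hl0.le _).symm
  clear hs_def
  have hq2 : Real.sqrt lam * Real.sqrt lam = lam := Real.mul_self_sqrt hl0.le
  have hr2 : Real.sqrt (1 - lam) * Real.sqrt (1 - lam) = 1 - lam := Real.mul_self_sqrt hl1'.le
  have hsθ : 0 ≤ Real.sin θ := Real.sin_nonneg_of_nonneg_of_le_pi hθ0 (by linarith)
  have hcθ : 0 ≤ Real.cos θ := Real.cos_nonneg_of_mem_Icc ⟨by linarith, hθ1⟩
  have hpyth : Real.sin θ ^ 2 + Real.cos θ ^ 2 = 1 := Real.sin_sq_add_cos_sq θ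
  have hsc : 0 ≤ Real.sin θ * Real.cos θ := mul_nonneg hsθ hcθ
  -- outcome formulas for any ρ with given diagonal
  have key : ∀ ρ : Matrix (Fin 2) (Fin 2) ℂ, ρ.PosSemidef →
      ρ 0 0 = (lam : ℂ) → ρ 1 1 = ((1 - lam : ℝ) : ℂ) →
      ∃ x : ℝ, -s ≤ x ∧ x ≤ s ∧
        outcome ρ v₁ = lam * Real.cos θ ^ 2 + (1 - lam) * Real.sin θ ^ 2
          - 2 * (Real.sin θ * Real.cos θ) * x ∧
        outcome ρ v₂ = lam * Real.sin θ ^ 2 + (1 - lam) * Real.cos θ ^ 2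
          + 2 * (Real.sin θ * Real.cos θ) * x := by
    intro ρ hρ hd0 hd1
    have h10 : (ρ 1 0).re = (ρ 0 1).re := by
      have := hρ.1.apply 0 1
      rw [← this]
      simp [Complex.conj_re]
    have hre0 : (ρ 0 0).re = lam := by rw [hd0]; simp
    have hre1 : (ρ 1 1).re = 1 - lam := by rw [hd1]; simp
    have hq : ∀ a b : ℝ, 0 ≤ a ^ 2 * lam + b ^ 2 * (1 - lam) + 2 * (a * b) * (ρ 0 1).re := by
      intro a b
      have h := (Complex.nonneg_iff.mp (hρ.dotProduct_mulVec_nonneg ![(a:ℂ), (b:ℂ)])).1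
      rw [quad_re ρ a b _ (by simp) (by simp)] at h
      rw [hre0, hre1, h10] at h
      linarith
    have hA : 0 ≤ 2 * (lam * (1 - lam)) + 2 * s * (ρ 0 1).re := by
      have h := hq (Real.sqrt (1 - lam)) (Real.sqrt lam)
      rw [Real.sq_sqrt hl1'.le, Real.sq_sqrt hl0.le,
        show Real.sqrt (1 - lam) * Real.sqrt lam = s from by rw [mul_comm]; exact hsl] at h
      linarith
    have hB : 0 ≤ 2 * (lam * (1 - lam)) - 2 * s * (ρ 0 1).re := by
      have h := hq (Real.sqrt (1 - lam)) (-(Real.sqrt lam))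
      rw [neg_sq, Real.sq_sqrt hl1'.le, Real.sq_sqrt hl0.le,
        show Real.sqrt (1 - lam) * -Real.sqrt lam = -s from by rw [← hsl]; ring] at h
      linarith
    refine ⟨(ρ 0 1).re, by nlinarith, by nlinarith, ?_, ?_⟩
    · rw [outcome, quad_re ρ (Real.cos θ) (-(Real.sin θ)) v₁
          (by rw [hv₁]; simp) (by rw [hv₁]; push_cast; simp),
        hre0, hre1, h10]
      ring
    · rw [outcome, quad_re ρ (Real.sin θ) (Real.cos θ) v₂
          (by rw [hv₂]; simp) (by rw [hv₂]; simp),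
        hre0, hre1, h10]
      ring
  -- witness outcomes for ε = ±1
  have wit : ∀ ε : ℝ, ε * ε = 1 →
      ∃ ρ : Matrix (Fin 2) (Fin 2) ℂ, ρ.PosSemidef ∧
        ρ 0 0 = (lam : ℂ) ∧ ρ 1 1 = ((1 - lam : ℝ) : ℂ) ∧
        outcome ρ v₁ = lam * Real.cos θ ^ 2 + (1 - lam) * Real.sin θ ^ 2
          - 2 * (Real.sin θ * Real.cos θ) * (ε * s) ∧
        outcome ρ v₂ = lam * Real.sin θ ^ 2 + (1 - lam) * Real.cos θ ^ 2
          + 2 * (Real.sin θ * Real.cos θ) * (ε * s) := by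
    intro ε hε2
    refine ⟨witness (Real.sqrt lam) (ε * Real.sqrt (1 - lam)), witness_psd _ _, ?_, ?_, ?_, ?_⟩
    · have h00 : (![Real.sqrt lam, ε * Real.sqrt (1 - lam)] (0 : Fin 2)
          * ![Real.sqrt lam, ε * Real.sqrt (1 - lam)] (0 : Fin 2)) = lam := by
        simp only [Matrix.cons_val_zero]; exact hq2
      rw [witness_apply, h00]
    · have h11 : (![Real.sqrt lam, ε * Real.sqrt (1 - lam)] (1 : Fin 2)
          * ![Real.sqrt lam, ε * Real.sqrt (1 - lam)] (1 : Fin 2)) = 1 - lam := by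
        simp only [Matrix.cons_val_one, Matrix.head_cons, Matrix.cons_val_zero]
        linear_combination (Real.sqrt (1 - lam) * Real.sqrt (1 - lam)) * hε2 + hr2
      rw [witness_apply, h11]
    · rw [outcome, quad_re _ (Real.cos θ) (-(Real.sin θ)) v₁
          (by rw [hv₁]; simp) (by rw [hv₁]; push_cast; simp)]
      rw [witness_apply, witness_apply, witness_apply, witness_apply]
      simp only [Matrix.cons_val_zero, Matrix.cons_val_one, Matrix.head_cons, Complex.ofReal_re]
      linear_combination (Real.cos θ ^ 2) * hq2
        + (Real.sin θ ^ 2 * (Real.sqrt (1 - lam) * Real.sqrt (1 - lam))) * hε2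
        + (Real.sin θ ^ 2) * hr2
        - (2 * Real.sin θ * Real.cos θ * ε) * hsl
    · rw [outcome, quad_re _ (Real.sin θ) (Real.cos θ) v₂
          (by rw [hv₂]; simp) (by rw [hv₂]; simp)]
      rw [witness_apply, witness_apply, witness_apply, witness_apply]
      simp only [Matrix.cons_val_zero, Matrix.cons_val_one, Matrix.head_cons, Complex.ofReal_re]
      linear_combination (Real.sin θ ^ 2) * hq2
        + (Real.cos θ ^ 2 * (Real.sqrt (1 - lam) * Real.sqrt (1 - lam))) * hε2
        + (Real.cos θ ^ 2) * hr2
        + (2 * Real.sin θ * Real.cos θ * ε) * hsl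
  constructor
  · -- θ < π/4
    intro hθ4
    have hsclt : Real.sin θ ≤ Real.cos θ := by
      have := Real.cos_le_cos_of_nonneg_of_le_pi hθ0 (by linarith) (by linarith : θ ≤ π / 2 - θ)
      rwa [Real.cos_pi_div_two_sub] at this
    have expand : (Real.sqrt lam * Real.sin θ + Real.sqrt (1 - lam) * Real.cos θ) ^ 2
        = lam * Real.sin θ ^ 2 + (1 - lam) * Real.cos θ ^ 2
          + 2 * (Real.sin θ * Real.cos θ) * s := by
      linear_combination (Real.sin θ ^ 2) * hq2 + (Real.cos θ ^ 2) * hr2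
        + (2 * Real.sin θ * Real.cos θ) * hsl
    constructor
    · obtain ⟨ρ, hρ, h0, h1, ho1, ho2⟩ := wit 1 (by norm_num)
      refine ⟨ρ, hρ, h0, h1, ?_⟩
      rw [ho1, ho2, expand, max_eq_right ?_]
      · ring
      · nlinarith [mul_nonneg (by linarith : (0:ℝ) ≤ 1 - 2 * lam)
          (mul_nonneg (by linarith : (0:ℝ) ≤ Real.cos θ - Real.sin θ)
            (by linarith : (0:ℝ) ≤ Real.cos θ + Real.sin θ)),
          mul_nonneg hsc hs0.le]
    · rintro t ⟨ρ, hρ, h0, h1, rfl⟩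
      obtain ⟨x, hx1, hx2, ho1, ho2⟩ := key ρ hρ h0 h1
      rw [ho1, ho2, expand]
      apply max_le
      · nlinarith [mul_nonneg hsc (by linarith : (0:ℝ) ≤ s + x),
          mul_nonneg (by linarith : (0:ℝ) ≤ 1 - 2 * lam)
            (mul_nonneg (by linarith : (0:ℝ) ≤ Real.cos θ - Real.sin θ)
              (by linarith : (0:ℝ) ≤ Real.cos θ + Real.sin θ))]
      · nlinarith [mul_nonneg hsc (by linarith : (0:ℝ) ≤ s - x)]
  · -- π/4 ≤ θ
    intro hθ4
    have hsclt : Real.cos θ ≤ Real.sin θ := by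
      have := Real.cos_le_cos_of_nonneg_of_le_pi (by linarith : (0:ℝ) ≤ π / 2 - θ)
        (by linarith) (by linarith : π / 2 - θ ≤ θ)
      rwa [Real.cos_pi_div_two_sub] at this
    have expand : (Real.sqrt (1 - lam) * Real.sin θ + Real.sqrt lam * Real.cos θ) ^ 2
        = lam * Real.cos θ ^ 2 + (1 - lam) * Real.sin θ ^ 2
          + 2 * (Real.sin θ * Real.cos θ) * s := by
      linear_combination (Real.cos θ ^ 2) * hq2 + (Real.sin θ ^ 2) * hr2
        + (2 * Real.sin θ * Real.cos θ) * hsl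
    constructor
    · obtain ⟨ρ, hρ, h0, h1, ho1, ho2⟩ := wit (-1) (by norm_num)
      refine ⟨ρ, hρ, h0, h1, ?_⟩
      rw [ho1, ho2, expand, max_eq_left ?_]
      · ring
      · nlinarith [mul_nonneg (by linarith : (0:ℝ) ≤ 1 - 2 * lam)
          (mul_nonneg (by linarith : (0:ℝ) ≤ Real.sin θ - Real.cos θ)
            (by linarith : (0:ℝ) ≤ Real.sin θ + Real.cos θ)),
          mul_nonneg hsc hs0.le]
    · rintro t ⟨ρ, hρ, h0, h1, rfl⟩
      obtain ⟨x, hx1, hx2, ho1, ho2⟩ := key ρ hρ h0 h1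
      rw [ho1, ho2, expand]
      apply max_le
      · nlinarith [mul_nonneg hsc (by linarith : (0:ℝ) ≤ s + x)]
      · nlinarith [mul_nonneg hsc (by linarith : (0:ℝ) ≤ s - x),
          mul_nonneg (by linarith : (0:ℝ) ≤ 1 - 2 * lam)
            (mul_nonneg (by linarith : (0:ℝ) ≤ Real.sin θ - Real.cos θ)
              (by linarith : (0:ℝ) ≤ Real.sin θ + Real.cos θ))]
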